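/- Under the balanced two-arm design, the bias matrix of the power-prior estimator is a scalar multiple of the identity: Σ_p · ((1/σ₁²)X₁ᵀX₁ + (a₀/(σ₀σ₁))X₀ᵀX₀) = κ·I₂ with κ = (n₁σ₀² + a₀n₀σ₀σ₁)/(n₁σ₀² + a₀n₀σ₁²), so that under the straPP transformation assumption the bias of each component of the power-prior estimator equals (κ − 1)·β₁ⱼ and the percent bias (κ − 1) = a₀n₀σ₁(σ₀ − σ₁)/(n₁σ₀² + a₀n₀σ₁²) does not depend on β₁. -/

import Mathlib

open Matrix

noncomputable section

/-- The design cross-product shape for the balanced two-arm design (intercept plus treatment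
indicator, half the subjects treated): `X₀ᵀX₀ = (n₀/2)·M` and `X₁ᵀX₁ = (n₁/2)·M` with `M` the
matrix with rows `(2,1)` and `(1,1)`. -/
def balM : Matrix (Fin 2) (Fin 2) ℝ := !![2, 1; 1, 1]

set_option maxHeartbeats 1000000 in
/-- Under the balanced two-arm design, the bias matrix of the power-prior estimator is a scalar
multiple of the identity: `Σ_p · ((1/σ₁²)X₁ᵀX₁ + (a₀/(σ₀σ₁))X₀ᵀX₀) = κ·I₂` with
`κ = (n₁σ₀² + a₀n₀σ₀σ₁)/(n₁σ₀² + a₀n₀σ₁²)`; hence under the straPP transformation assumption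
the bias of each component of the power-prior estimator is `(κ − 1)·β₁ⱼ`, and the percent bias
`κ − 1 = a₀n₀σ₁(σ₀ − σ₁)/(n₁σ₀² + a₀n₀σ₁²)` does not depend on `β₁`. -/
theorem pp_bias_matrix_balanced_design (n₀ n₁ σ₀ σ₁ a₀ : ℝ)
    (hn₀ : 0 < n₀) (hn₁ : 0 < n₁) (hσ₀ : 0 < σ₀) (hσ₁ : 0 < σ₁)
    (ha₀ : 0 < a₀) (ha₀' : a₀ ≤ 1) :
    ((1 / σ₁ ^ 2) • ((n₁ / 2) • balM) + (a₀ / σ₀ ^ 2) • ((n₀ / 2) • balM))⁻¹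
        * ((1 / σ₁ ^ 2) • ((n₁ / 2) • balM) + (a₀ / (σ₀ * σ₁)) • ((n₀ / 2) • balM))
      = ((n₁ * σ₀ ^ 2 + a₀ * n₀ * σ₀ * σ₁) / (n₁ * σ₀ ^ 2 + a₀ * n₀ * σ₁ ^ 2))
          • (1 : Matrix (Fin 2) (Fin 2) ℝ) ∧
    (n₁ * σ₀ ^ 2 + a₀ * n₀ * σ₀ * σ₁) / (n₁ * σ₀ ^ 2 + a₀ * n₀ * σ₁ ^ 2) - 1
      = a₀ * n₀ * σ₁ * (σ₀ - σ₁) / (n₁ * σ₀ ^ 2 + a₀ * n₀ * σ₁ ^ 2) ∧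
    ∀ (β₁ : Fin 2 → ℝ) (j : Fin 2),
      ((((1 / σ₁ ^ 2) • ((n₁ / 2) • balM) + (a₀ / σ₀ ^ 2) • ((n₀ / 2) • balM))⁻¹
          * ((1 / σ₁ ^ 2) • ((n₁ / 2) • balM)
              + (a₀ / (σ₀ * σ₁)) • ((n₀ / 2) • balM))).mulVec β₁) j - β₁ j
        = ((n₁ * σ₀ ^ 2 + a₀ * n₀ * σ₀ * σ₁) / (n₁ * σ₀ ^ 2 + a₀ * n₀ * σ₁ ^ 2) - 1)
            * β₁ j := by
  set κ := (n₁ * σ₀ ^ 2 + a₀ * n₀ * σ₀ * σ₁) / (n₁ * σ₀ ^ 2 + a₀ * n₀ * σ₁ ^ 2) with hκ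
  set A := (1 / σ₁ ^ 2) • ((n₁ / 2) • balM) + (a₀ / σ₀ ^ 2) • ((n₀ / 2) • balM) with hA
  set B := (1 / σ₁ ^ 2) • ((n₁ / 2) • balM) + (a₀ / (σ₀ * σ₁)) • ((n₀ / 2) • balM) with hB
  have hden : n₁ * σ₀ ^ 2 + a₀ * n₀ * σ₁ ^ 2 ≠ 0 := by positivity
  have hBA : B = κ • A := by
    rw [hA, hB, hκ]
    ext i j
    fin_cases i <;> fin_cases j <;>
      · simp only [Matrix.add_apply, Matrix.smul_apply, balM, Matrix.cons_val', Matrix.cons_val_zero,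
          Matrix.cons_val_one, Matrix.head_cons, Matrix.empty_val', Matrix.cons_val_fin_one,
          Matrix.head_fin_const, smul_eq_mul]
        field_simp
  have hdet : A.det ≠ 0 := by
    have : A.det = ((n₁ * σ₀ ^ 2 + a₀ * n₀ * σ₁ ^ 2) / (2 * σ₀ ^ 2 * σ₁ ^ 2)) ^ 2 := by
      rw [hA]
      simp only [Matrix.det_fin_two, Matrix.add_apply, Matrix.smul_apply, balM, Matrix.of_apply,
        Matrix.cons_val', Matrix.cons_val_zero, Matrix.cons_val_one, Matrix.head_cons,
        Matrix.empty_val', Matrix.cons_val_fin_one, Matrix.head_fin_const, smul_eq_mul]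
      field_simp
      ring
    rw [this]
    positivity
  have hmain : A⁻¹ * B = κ • (1 : Matrix (Fin 2) (Fin 2) ℝ) := by
    rw [hBA, Matrix.mul_smul, Matrix.nonsing_inv_mul A (isUnit_iff_ne_zero.mpr hdet)]
  refine ⟨hmain, ?_, ?_⟩
  · rw [hκ, div_sub_one hden]
    ring_nf
  · intro β₁ j
    rw [hmain]
    simp [Matrix.smul_mulVec, Matrix.one_mulVec]
    ring
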